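/- The PM-monoid ℛ_n decomposes as a disjoint union of double cosets of its unit group over the standard idempotents: ℛ_n = ⊔_{e ∈ Λ_n} W e W, where Λ_n is the set of idempotents corresponding to interval partitions (k_1,...,k_{m-1}) with 1 ≤ k_1 < ... < k_{m-1} < n, and the union is disjoint. -/

import Mathlib

/-- `l` is an ordered set partition of `{0,...,n-1}`: a list of pairwise disjoint
nonempty blocks whose union is everything. -/
def IsOSP (n : ℕ) (l : List (Finset (Fin n))) : Prop :=
  (∀ b ∈ l, b ≠ ∅) ∧ l.Pairwise Disjoint ∧ l.foldr (· ∪ ·) ∅ = Finset.univ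

/-- Intersection product of ordered set partitions: list the nonempty
intersections `p_i ∩ q_j`, ordered first by `j` then by `i`. -/
def ospMul (n : ℕ) (p q : List (Finset (Fin n))) : List (Finset (Fin n)) :=
  (q.flatMap (fun b => p.map (fun a => a ∩ b))).filter (fun a => a ≠ ∅)

/-- Blockwise application of a permutation to an ordered set partition. -/
def permAct (n : ℕ) (σ : Equiv.Perm (Fin n)) (p : List (Finset (Fin n))) :
    List (Finset (Fin n)) :=
  p.map (fun b => b.image σ)

/-- The PM-monoid product: `(σ,p)·(τ,q) = (στ, τ⁻¹(p) * q)`. -/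
def pmMul (n : ℕ) (x y : Equiv.Perm (Fin n) × List (Finset (Fin n))) :
    Equiv.Perm (Fin n) × List (Finset (Fin n)) :=
  (x.1 * y.1, ospMul n (permAct n y.1⁻¹ x.2) y.2)

/-- The identity element `(id, ({1,...,n}))` of the PM-monoid. -/
def pmId (n : ℕ) : Equiv.Perm (Fin n) × List (Finset (Fin n)) :=
  ((1 : Equiv.Perm (Fin n)), [(Finset.univ : Finset (Fin n))])

/-- `x* = (σ⁻¹, σ(p))`. -/
def pmStar (n : ℕ) (x : Equiv.Perm (Fin n) × List (Finset (Fin n))) :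
    Equiv.Perm (Fin n) × List (Finset (Fin n)) :=
  (x.1⁻¹, permAct n x.1 x.2)

/-- Stirling numbers of the second kind. -/
def stirling2 : ℕ → ℕ → ℕ
  | 0, 0 => 1
  | 0, _ + 1 => 0
  | _ + 1, 0 => 0
  | n + 1, m + 1 => (m + 1) * stirling2 n (m + 1) + stirling2 n m

/-- Interval ordered set partition: blocks are consecutive intervals in increasing order. -/
def IsIntervalOSP (n : ℕ) (l : List (Finset (Fin n))) : Prop :=
  IsOSP n l ∧ l.Pairwise (fun a b => ∀ x ∈ a, ∀ y ∈ b, x < y)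

/-! ### Auxiliary lemmas -/

section Aux

variable {n : ℕ}

lemma mem_foldr_union {α : Type*} [DecidableEq α] (l : List (Finset α)) (x : α) :
    x ∈ l.foldr (· ∪ ·) ∅ ↔ ∃ b ∈ l, x ∈ b := by
  induction l with
  | nil => simp
  | cons a t ih => simp [ih]

lemma ospMul_univ_left (p : List (Finset (Fin n))) (hp : ∀ b ∈ p, b ≠ ∅) :
    ospMul n [Finset.univ] p = p := by
  unfold ospMul
  have h1 : p.flatMap (fun b => [(Finset.univ : Finset (Fin n))].map (fun a => a ∩ b)) = p := by
    induction p with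
    | nil => rfl
    | cons a t ih =>
      simp only [List.flatMap_cons] at ih ⊢
      simp [ih, Finset.univ_inter]
  rw [h1, List.filter_eq_self]
  intro a ha
  simpa using hp a ha

lemma ospMul_univ_right (p : List (Finset (Fin n))) (hp : ∀ b ∈ p, b ≠ ∅) :
    ospMul n p [Finset.univ] = p := by
  unfold ospMul
  have h1 : ([(Finset.univ : Finset (Fin n))]).flatMap (fun b => p.map (fun a => a ∩ b)) = p := by
    simp [List.flatMap_cons, Finset.inter_univ]
  rw [h1, List.filter_eq_self]
  intro a ha
  simpa using hp a ha

/-- The key computation: the double-coset product has shape `(u·v, v⁻¹(p))`. -/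
lemma pm_key (n : ℕ) (u v : Equiv.Perm (Fin n)) (p : List (Finset (Fin n)))
    (hp : ∀ b ∈ p, b ≠ ∅) :
    pmMul n (pmMul n ((u, [Finset.univ]) : Equiv.Perm (Fin n) × List (Finset (Fin n)))
        (1, p)) (v, [Finset.univ]) =
      (u * v, p.map fun b => b.image ⇑v⁻¹) := by
  have h1 : pmMul n ((u, [Finset.univ]) : Equiv.Perm (Fin n) × List (Finset (Fin n))) (1, p)
      = (u, p) := by
    unfold pmMul
    simp only [mul_one, inv_one]
    have : permAct n 1 [(Finset.univ : Finset (Fin n))] = [Finset.univ] := by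
      simp [permAct]
    rw [this, ospMul_univ_left p hp]
  rw [h1]
  unfold pmMul
  simp only []
  rw [ospMul_univ_right]
  · rfl
  · intro b hb
    obtain ⟨a, ha, rfl⟩ := List.mem_map.mp (by exact hb)
    have := hp a ha
    simp only [ne_eq, Finset.image_eq_empty]
    exact this

/-- Gluing map: sends the `i`-th block of `p` to the `i`-th block of `q`
(order-preservingly within blocks). -/
def glue (n : ℕ) : List (Finset (Fin n)) → List (Finset (Fin n)) → Fin n → Fin n
  | a :: p, b :: q => fun x =>
      if hx : x ∈ a then
        if h : a.card = b.card then
          b.orderEmbOfFin h.symm ((a.orderIsoOfFin rfl).symm ⟨x, hx⟩)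
        else x
      else glue n p q x
  | _, [] => fun x => x
  | [], _ => fun x => x

lemma forall2_of_mem {α β : Type*} {R S : α → β → Prop} :
    ∀ {l1 : List α} {l2 : List β}, List.Forall₂ R l1 l2 →
      (∀ a ∈ l1, ∀ b, R a b → S a b) → List.Forall₂ S l1 l2 := by
  intro l1 l2 h
  induction h with
  | nil => intro _; exact List.Forall₂.nil
  | @cons a b t1 t2 hab _ ih =>
    intro h
    exact List.Forall₂.cons (h a (by simp) b hab)
      (ih fun a' ha' b' => h a' (by simp [ha']) b')

lemma glue_forall2 (n : ℕ) : ∀ {p q : List (Finset (Fin n))},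
    List.Forall₂ (fun a b => a.card = b.card) p q → p.Pairwise Disjoint →
    List.Forall₂ (fun a b => a.image (glue n p q) = b) p q := by
  intro p q h
  induction h with
  | nil => intro _; exact List.Forall₂.nil
  | @cons a b t1 t2 hab htail ih =>
    intro hpw
    rw [List.pairwise_cons] at hpw
    refine List.Forall₂.cons ?_ ?_
    · -- head block maps onto head block
      have hsub : a.image (glue n (a :: t1) (b :: t2)) ⊆ b := by
        intro y hy
        obtain ⟨x, hx, rfl⟩ := Finset.mem_image.mp hy
        show (if hx' : x ∈ a then _ else _) ∈ b
        rw [dif_pos hx, dif_pos hab]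
        exact Finset.orderEmbOfFin_mem b hab.symm _
      have hinj : Set.InjOn (glue n (a :: t1) (b :: t2)) a := by
        intro x hx y hy hxy
        simp only [Finset.mem_coe] at hx hy
        have ex : glue n (a :: t1) (b :: t2) x
            = b.orderEmbOfFin hab.symm ((a.orderIsoOfFin rfl).symm ⟨x, hx⟩) := by
          show (if hx' : x ∈ a then _ else _) = _
          rw [dif_pos hx, dif_pos hab]
        have ey : glue n (a :: t1) (b :: t2) y
            = b.orderEmbOfFin hab.symm ((a.orderIsoOfFin rfl).symm ⟨y, hy⟩) := by
          show (if hy' : y ∈ a then _ else _) = _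
          rw [dif_pos hy, dif_pos hab]
        rw [ex, ey] at hxy
        have h1 := (b.orderEmbOfFin hab.symm).injective hxy
        have h2 := (a.orderIsoOfFin rfl).symm.injective h1
        exact congrArg Subtype.val h2
      have hcard : (a.image (glue n (a :: t1) (b :: t2))).card = b.card := by
        rw [Finset.card_image_of_injOn hinj, hab]
      exact Finset.eq_of_subset_of_card_le hsub (le_of_eq hcard.symm)
    · -- tail blocks
      have htl := ih hpw.2
      refine forall2_of_mem htl ?_
      intro a' ha' b' hb'
      have hdisj : Disjoint a a' := hpw.1 a' ha'
      rw [← hb']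
      apply Finset.image_congr
      intro x hx
      simp only [Finset.mem_coe] at hx
      have hxa : x ∉ a := Finset.disjoint_right.mp hdisj hx
      show (if hx' : x ∈ a then _ else _) = glue n t1 t2 x
      rw [dif_neg hxa]

lemma foldr_union_image {n : ℕ} {f : Fin n → Fin n} :
    ∀ {p q : List (Finset (Fin n))},
      List.Forall₂ (fun a b => a.image f = b) p q →
      (p.foldr (· ∪ ·) ∅).image f = q.foldr (· ∪ ·) ∅ := by
  intro p q h
  induction h with
  | nil => simp
  | cons hab _ ih => simpa [Finset.image_union, ih] using congrArg₂ (· ∪ ·) hab ih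

lemma map_eq_of_forall2 {α β : Type*} {F : α → β} :
    ∀ {p : List α} {q : List β}, List.Forall₂ (fun a b => F a = b) p q → p.map F = q := by
  intro p q h
  induction h with
  | nil => rfl
  | cons hab _ ih => simp [hab, ih]

lemma forall2_of_map_eq {α β γ : Type*} {F : α → γ} {G : β → γ} :
    ∀ {p : List α} {q : List β}, p.map F = q.map G →
      List.Forall₂ (fun a b => F a = G b) p q := by
  intro p
  induction p with
  | nil =>
    intro q h
    cases q with
    | nil => exact List.Forall₂.nil
    | cons b t => simp at h
  | cons a t ih =>
    intro q h
    cases q with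
    | nil => simp at h
    | cons b t' =>
      simp only [List.map_cons, List.cons.injEq] at h
      exact List.Forall₂.cons h.1 (ih h.2)

/-- The canonical interval blocks with offsets. -/
def ivB (n : ℕ) : ℕ → List ℕ → List (Finset (Fin n))
  | _, [] => []
  | a, c :: cs =>
      (Finset.univ.filter fun x : Fin n => a ≤ (x : ℕ) ∧ (x : ℕ) < a + c) :: ivB n (a + c) cs

lemma ivB_block_card (a c : ℕ) (h : a + c ≤ n) :
    (Finset.univ.filter fun x : Fin n => a ≤ (x : ℕ) ∧ (x : ℕ) < a + c).card = c := by
  have himg : (Finset.univ.filter fun x : Fin n => a ≤ (x : ℕ) ∧ (x : ℕ) < a + c).image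
      (Fin.val) = Finset.Ico a (a + c) := by
    ext m
    simp only [Finset.mem_image, Finset.mem_filter, Finset.mem_univ, true_and, Finset.mem_Ico]
    constructor
    · rintro ⟨x, hx, rfl⟩; exact hx
    · rintro ⟨h1, h2⟩
      exact ⟨⟨m, lt_of_lt_of_le h2 h⟩, ⟨h1, h2⟩, rfl⟩
  have := congrArg Finset.card himg
  rwa [Finset.card_image_of_injective _ Fin.val_injective, Nat.card_Ico,
    Nat.add_sub_cancel_left] at this

lemma ivB_lower : ∀ (cs : List ℕ) (a : ℕ), ∀ b ∈ ivB n a cs, ∀ x ∈ b, a ≤ (x : ℕ) := by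
  intro cs
  induction cs with
  | nil => intro a b hb; simp [ivB] at hb
  | cons c t ih =>
    intro a b hb x hx
    simp only [ivB, List.mem_cons] at hb
    rcases hb with rfl | hb
    · exact (Finset.mem_filter.mp hx).2.1
    · exact le_trans (Nat.le_add_right a c) (ih (a + c) b hb x hx)

lemma ivB_pairwise_lt : ∀ (cs : List ℕ) (a : ℕ),
    (ivB n a cs).Pairwise (fun s t => ∀ x ∈ s, ∀ y ∈ t, x < y) := by
  intro cs
  induction cs with
  | nil => intro a; exact List.Pairwise.nil
  | cons c t ih =>
    intro a
    refine List.Pairwise.cons ?_ (ih (a + c))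
    intro b hb x hx y hy
    have h1 : (x : ℕ) < a + c := (Finset.mem_filter.mp hx).2.2
    have h2 : a + c ≤ (y : ℕ) := ivB_lower t (a + c) b hb y hy
    exact Fin.lt_def.mpr (lt_of_lt_of_le h1 h2)

lemma ivB_union : ∀ (cs : List ℕ) (a : ℕ), a + cs.sum = n →
    (ivB n a cs).foldr (· ∪ ·) ∅ = Finset.univ.filter fun x : Fin n => a ≤ (x : ℕ) := by
  intro cs
  induction cs with
  | nil =>
    intro a ha
    simp only [List.sum_nil, Nat.add_zero] at ha
    subst ha
    simp only [ivB, List.foldr_nil]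
    ext x
    simp only [Finset.notMem_empty, Finset.mem_filter, Finset.mem_univ, true_and, false_iff]
    exact Nat.not_le.mpr x.isLt
  | cons c t ih =>
    intro a ha
    simp only [List.sum_cons] at ha
    have ha' : a + c + t.sum = n := by omega
    simp only [ivB, List.foldr_cons, ih (a + c) ha']
    ext x
    simp only [Finset.mem_union, Finset.mem_filter, Finset.mem_univ, true_and]
    omega

lemma ivB_cards : ∀ (cs : List ℕ) (a : ℕ), a + cs.sum ≤ n →
    (ivB n a cs).map Finset.card = cs := by
  intro cs
  induction cs with
  | nil => intro a _; rfl
  | cons c t ih =>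
    intro a h
    simp only [List.sum_cons] at h
    simp only [ivB, List.map_cons]
    rw [ivB_block_card a c (by omega), ih (a + c) (by omega)]

lemma card_foldr_union {α : Type*} [DecidableEq α] :
    ∀ (l : List (Finset α)), l.Pairwise Disjoint →
      (l.foldr (· ∪ ·) ∅).card = (l.map Finset.card).sum := by
  intro l
  induction l with
  | nil => simp
  | cons a t ih =>
    intro h
    rw [List.pairwise_cons] at h
    have hd : Disjoint a (t.foldr (· ∪ ·) ∅) := by
      rw [Finset.disjoint_right]
      intro x hx hxa
      obtain ⟨b, hb, hxb⟩ := (mem_foldr_union t x).mp hx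
      exact (Finset.disjoint_left.mp (h.1 b hb) hxa) hxb
    simp only [List.foldr_cons, List.map_cons, List.sum_cons]
    rw [Finset.card_union_of_disjoint hd, ih h.2]

/-- Two "ordered interval-style" partitions of the same set with the same block sizes
are equal. -/
lemma osp_ext : ∀ (p p' : List (Finset (Fin n))) (S : Finset (Fin n)),
    p.Pairwise (fun s t => ∀ x ∈ s, ∀ y ∈ t, x < y) →
    p'.Pairwise (fun s t => ∀ x ∈ s, ∀ y ∈ t, x < y) →
    p.foldr (· ∪ ·) ∅ = S → p'.foldr (· ∪ ·) ∅ = S →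
    p.map Finset.card = p'.map Finset.card → p = p' := by
  intro p
  induction p with
  | nil =>
    intro p' S _ _ _ _ hc
    cases p' with
    | nil => rfl
    | cons a t => simp at hc
  | cons a t ih =>
    intro p' S hpw hpw' hU hU' hc
    cases p' with
    | nil => simp at hc
    | cons a' t' =>
      rw [List.pairwise_cons] at hpw hpw'
      simp only [List.map_cons, List.cons.injEq] at hc
      simp only [List.foldr_cons] at hU hU'
      -- key: if some x ∈ b \ b', then b' ⊆ b
      have habs : ∀ (b b' : Finset (Fin n)) (u u' : List (Finset (Fin n))),
          (∀ s ∈ u, ∀ x ∈ b, ∀ y ∈ s, x < y) →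
          (∀ s ∈ u', ∀ x ∈ b', ∀ y ∈ s, x < y) →
          b ∪ u.foldr (· ∪ ·) ∅ = b' ∪ u'.foldr (· ∪ ·) ∅ →
          ∀ x ∈ b, x ∉ b' → b' ⊆ b := by
        intro b b' u u' hb hb' hS x hxb hxb' y hy
        have hxS : x ∈ b' ∪ u'.foldr (· ∪ ·) ∅ := by
          rw [← hS]; exact Finset.mem_union_left _ hxb
        have hxu' : x ∈ u'.foldr (· ∪ ·) ∅ := by
          rcases Finset.mem_union.mp hxS with h | h
          · exact absurd h hxb'
          · exact h
        obtain ⟨s, hs, hxs⟩ := (mem_foldr_union u' x).mp hxu'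
        have hyx : y < x := hb' s hs y hy x hxs
        have hyS : y ∈ b ∪ u.foldr (· ∪ ·) ∅ := by
          rw [hS]; exact Finset.mem_union_left _ hy
        rcases Finset.mem_union.mp hyS with h | h
        · exact h
        · obtain ⟨s', hs', hys'⟩ := (mem_foldr_union u y).mp h
          exact absurd (hb s' hs' x hxb y hys') (lt_asymm hyx)
      have haa : a = a' := by
        by_cases hss : a ⊆ a'
        · exact Finset.eq_of_subset_of_card_le hss (le_of_eq hc.1.symm)
        · obtain ⟨x, hxa, hxa'⟩ := Finset.not_subset.mp hss
          have hsub : a' ⊆ a :=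
            habs a a' t t' hpw.1 hpw'.1 (hU.trans hU'.symm) x hxa hxa'
          have : a' = a := Finset.eq_of_subset_of_card_le hsub (le_of_eq hc.1)
          exact this.symm
      subst haa
      -- tails have equal unions
      have hdis : Disjoint a (t.foldr (· ∪ ·) ∅) := by
        rw [Finset.disjoint_right]
        intro z hz hza
        obtain ⟨s, hs, hzs⟩ := (mem_foldr_union t z).mp hz
        exact lt_irrefl z (hpw.1 s hs z hza z hzs)
      have hdis' : Disjoint a (t'.foldr (· ∪ ·) ∅) := by
        rw [Finset.disjoint_right]
        intro z hz hza
        obtain ⟨s, hs, hzs⟩ := (mem_foldr_union t' z).mp hz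
        exact lt_irrefl z (hpw'.1 s hs z hza z hzs)
      have hUt : t.foldr (· ∪ ·) ∅ = S \ a := by
        rw [← hU]
        rw [Finset.union_sdiff_cancel_left hdis]
      have hUt' : t'.foldr (· ∪ ·) ∅ = S \ a := by
        rw [← hU']
        rw [Finset.union_sdiff_cancel_left hdis']
      rw [ih t' (S \ a) hpw.2 hpw'.2 hUt hUt' hc.2]

end Aux

/-- `ℛ_n = ⊔_{e ∈ Λ_n} W e W`, a disjoint union of double cosets over
the standard interval-partition idempotents. -/
theorem stmt11 (n : ℕ) (hn : 1 ≤ n)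
    (x : Equiv.Perm (Fin n) × List (Finset (Fin n))) (hx : IsOSP n x.2) :
    ∃! p : List (Finset (Fin n)), IsIntervalOSP n p ∧
      ∃ u v : Equiv.Perm (Fin n),
        x = pmMul n (pmMul n ((u, [Finset.univ]) : Equiv.Perm (Fin n) × List (Finset (Fin n)))
          (1, p)) (v, [Finset.univ]) := by
  obtain ⟨hne, hdisj, hU⟩ := hx
  set cs : List ℕ := x.2.map Finset.card with hcs
  have hsum : cs.sum = n := by
    have := card_foldr_union x.2 hdisj
    rw [hU] at this
    simpa [Finset.card_univ] using this.symm
  set p : List (Finset (Fin n)) := ivB n 0 cs with hp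
  have hcards : p.map Finset.card = cs := ivB_cards cs 0 (by omega)
  have hplt : p.Pairwise (fun s t => ∀ x ∈ s, ∀ y ∈ t, x < y) := ivB_pairwise_lt cs 0
  have hpU : p.foldr (· ∪ ·) ∅ = Finset.univ := by
    rw [hp, ivB_union cs 0 (by omega)]
    ext z
    simp
  have hpdisj : p.Pairwise Disjoint := by
    refine hplt.imp ?_
    intro s t h
    rw [Finset.disjoint_left]
    intro z hzs hzt
    exact lt_irrefl z (h z hzs z hzt)
  have hpne : ∀ b ∈ p, b ≠ ∅ := by
    intro b hb
    have hbc : b.card ∈ cs := by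
      rw [← hcards]
      exact List.mem_map_of_mem (f := Finset.card) hb
    rw [hcs] at hbc
    obtain ⟨a, ha, hac⟩ := List.mem_map.mp hbc
    intro hbe
    apply hne a ha
    rw [← Finset.card_eq_zero, hac, hbe, Finset.card_empty]
  have hiv : IsIntervalOSP n p := ⟨⟨hpne, hpdisj, hpU⟩, hplt⟩
  -- build the permutation
  have hf2 : List.Forall₂ (fun a b => a.card = b.card) p x.2 := by
    have := forall2_of_map_eq (F := Finset.card) (G := Finset.card)
      (p := p) (q := x.2) (by rw [hcards, hcs])
    exact this
  have himg := glue_forall2 n hf2 hpdisj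
  set f : Fin n → Fin n := glue n p x.2 with hfdef
  have hmapf : p.map (fun b => b.image f) = x.2 := map_eq_of_forall2 himg
  have hsurj : Function.Surjective f := by
    intro y
    have h1 : (Finset.univ : Finset (Fin n)).image f = Finset.univ := by
      have h0 := foldr_union_image himg
      rwa [hpU, hU] at h0
    have : y ∈ (Finset.univ : Finset (Fin n)).image f := by rw [h1]; exact Finset.mem_univ y
    obtain ⟨z, _, hz⟩ := Finset.mem_image.mp this
    exact ⟨z, hz⟩
  have hbij : Function.Bijective f := Finite.surjective_iff_bijective.mp hsurj
  set w : Equiv.Perm (Fin n) := Equiv.ofBijective f hbij with hw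
  have hwf : ⇑w = f := rfl
  refine ⟨p, ⟨hiv, x.1 * w, w⁻¹, ?_⟩, ?_⟩
  · rw [pm_key n (x.1 * w) w⁻¹ p hpne]
    have h1 : x.1 * w * w⁻¹ = x.1 := by group
    have h2 : ⇑(w⁻¹)⁻¹ = f := by rw [inv_inv]; exact hwf
    rw [h1, h2, hmapf]
  · rintro p' ⟨hiv', u', v', heq⟩
    rw [pm_key n u' v' p' hiv'.1.1] at heq
    have h2 : x.2 = p'.map fun b => b.image ⇑v'⁻¹ := congrArg Prod.snd heq
    have hc' : p'.map Finset.card = cs := by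
      rw [hcs, h2, List.map_map]
      apply List.map_congr_left
      intro b _
      simp only [Function.comp_apply]
      exact (Finset.card_image_of_injective b (Equiv.injective _)).symm
    refine osp_ext p' p Finset.univ hiv'.2 hplt hiv'.1.2.2 hpU ?_
    rw [hc', hcards]
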